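/- Every element γ of Γ can be expressed uniquely in the form γ = a·m_0 + g_s + b·m_n with a ∈ ℕ₀ and (s,b) ∈ V∖W. -/

import Mathlib

/-- For `t ≥ 1`, the quotient `q_t` in the division `t = q_t·p + r_t` with `r_t ∈ [1,p]`. -/
def qF (p t : ℕ) : ℕ := (t - 1) / p

/-- For `t ≥ 1`, the remainder `r_t ∈ [1,p]` in the division `t = q_t·p + r_t`. -/
def rF (p t : ℕ) : ℕ := (t - 1) % p + 1

/-- `g_t = q_t·m_p + m_{r_t}` for `t ≥ 1`, and `g_0 = 0`. -/
def gF (p : ℕ) (m : ℕ → ℕ) (t : ℕ) : ℕ :=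
  if t = 0 then 0 else qF p t * m p + m (rF p t)

/-- The set of non-negative integer combinations `Σ_{i=0}^{k} a_i·m_i`. -/
def gammaGen (k : ℕ) (m : ℕ → ℕ) : Set ℕ :=
  {x | ∃ a : ℕ → ℕ, x = ∑ i ∈ Finset.range (k + 1), a i * m i}

set_option maxHeartbeats 1000000

namespace Stmt4Aux

def ce (p t : ℕ) : ℕ := (t + p - 1) / p

lemma ce_le_iff {p : ℕ} (hp : 1 ≤ p) {t k : ℕ} : ce p t ≤ k ↔ t ≤ p * k := by
  unfold ce
  rw [Nat.div_le_iff_le_mul_add_pred (by omega : 0 < p)]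
  omega

lemma le_ce {p : ℕ} (hp : 1 ≤ p) (t : ℕ) : t ≤ p * ce p t := (ce_le_iff hp).1 le_rfl

lemma ce_zero {p : ℕ} (hp : 1 ≤ p) : ce p 0 = 0 := by
  have := (ce_le_iff hp (t := 0) (k := 0)).2 (by omega); omega

lemma ce_pos {p : ℕ} (hp : 1 ≤ p) {x : ℕ} (hx : 1 ≤ x) : 1 ≤ ce p x := by
  by_contra h
  have := (ce_le_iff hp).1 (show ce p x ≤ 0 by omega)
  omega

lemma ce_subadd {p : ℕ} (hp : 1 ≤ p) (x y : ℕ) : ce p (x + y) ≤ ce p x + ce p y := by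
  rw [ce_le_iff hp, Nat.mul_add]
  have := le_ce hp x; have := le_ce hp y; omega

lemma ce_super {p : ℕ} (hp : 1 ≤ p) (x y : ℕ) : ce p x + ce p y ≤ ce p (x + y) + 1 := by
  rcases Nat.eq_zero_or_pos x with hx | hx
  · subst hx
    rw [ce_zero hp]
    simpa using Nat.le_succ_of_le le_rfl
  rcases Nat.eq_zero_or_pos y with hy | hy
  · subst hy
    rw [ce_zero hp, add_zero, add_zero]
    exact Nat.le_succ_of_le le_rfl
  · have hcx := ce_pos hp hx
    have hcy := ce_pos hp hy
    have hxx : p * (ce p x - 1) < x := by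
      by_contra h
      have := (ce_le_iff hp).2 (show x ≤ p * (ce p x - 1) by omega)
      omega
    have hyy : p * (ce p y - 1) < y := by
      by_contra h
      have := (ce_le_iff hp).2 (show y ≤ p * (ce p y - 1) by omega)
      omega
    have hxy := le_ce hp (x + y)
    by_contra hcon
    have h1 : p * (ce p x - 1) + p * (ce p y - 1) = p * (ce p x + ce p y - 2) := by
      rw [← Nat.mul_add]; congr 1; omega
    have h2 : p * (ce p (x + y)) ≤ p * (ce p x + ce p y - 2) :=
      Nat.mul_le_mul_left _ (by omega)
    omega

lemma gF_eq {p : ℕ} (hp : 1 ≤ p) (m : ℕ → ℕ) (c : ℕ)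
    (harith : ∀ i ≤ p, m i = m 0 + i * c) :
    ∀ t, gF p m t = ce p t * m 0 + t * c := by
  intro t
  rcases Nat.eq_zero_or_pos t with ht | ht
  · subst ht; simp [gF, ce_zero hp]
  · unfold gF qF rF
    rw [if_neg (by omega)]
    have hrlt : (t - 1) % p < p := Nat.mod_lt _ (by omega)
    rw [harith p le_rfl, harith _ (by omega : (t - 1) % p + 1 ≤ p)]
    have hdm : p * ((t - 1) / p) + (t - 1) % p = t - 1 := Nat.div_add_mod _ _
    have hce : ce p t = (t - 1) / p + 1 := by
      unfold ce
      have h2 : t + p - 1 = (t - 1) + 1 * p := by omega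
      rw [h2, Nat.add_mul_div_right _ _ (by omega : 0 < p)]
    rw [hce]
    zify [ht] at hdm ⊢
    linear_combination (c : ℤ) * hdm

lemma zero_mem (k : ℕ) (m : ℕ → ℕ) : 0 ∈ gammaGen k m :=
  ⟨fun _ => 0, by simp⟩

lemma add_mem {k : ℕ} {m : ℕ → ℕ} {x y : ℕ} (hx : x ∈ gammaGen k m)
    (hy : y ∈ gammaGen k m) : x + y ∈ gammaGen k m := by
  obtain ⟨a, ha⟩ := hx; obtain ⟨b, hb⟩ := hy
  exact ⟨fun i => a i + b i, by simp [ha, hb, add_mul, Finset.sum_add_distrib]⟩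

lemma single_mem {k : ℕ} {m : ℕ → ℕ} {j : ℕ} (hj : j ≤ k) (d : ℕ) :
    d * m j ∈ gammaGen k m := by
  refine ⟨fun i => if i = j then d else 0, Eq.symm ?_⟩
  have h1 : ∀ i ∈ Finset.range (k + 1),
      (if i = j then d else 0) * m i = if i = j then d * m j else 0 := by
    intro i _; by_cases h : i = j <;> simp [h]
  rw [Finset.sum_congr rfl h1,
    Finset.sum_ite_eq' (Finset.range (k + 1)) j (fun _ => d * m j),
    if_pos (Finset.mem_range.2 (by omega))]

lemma comb_mem {p k : ℕ} {m : ℕ → ℕ} (hp : 1 ≤ p) (hpk : p ≤ k) (a t : ℕ) :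
    a * m 0 + gF p m t ∈ gammaGen k m := by
  apply add_mem (single_mem (by omega) a)
  unfold gF
  split
  · exact zero_mem k m
  · apply add_mem (single_mem hpk _)
    have hr : rF p t ≤ p := by
      unfold rF
      have : (t - 1) % p < p := Nat.mod_lt _ (by omega)
      omega
    have h1 : m (rF p t) = 1 * m (rF p t) := (one_mul _).symm
    rw [h1]
    exact single_mem (le_trans hr hpk) 1

lemma forward {p : ℕ} (hp : 1 ≤ p) {m : ℕ → ℕ} {c : ℕ}
    (harith : ∀ i ≤ p, m i = m 0 + i * c) {γ : ℕ} (hγ : γ ∈ gammaGen (p + 1) m) :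
    ∃ a t e, γ = a * m 0 + gF p m t + e * m (p + 1) := by
  obtain ⟨a, ha⟩ := hγ
  rw [Finset.sum_range_succ] at ha
  have hsum : ∑ i ∈ Finset.range (p + 1), a i * m i
      = (∑ i ∈ Finset.range (p + 1), a i) * m 0
        + (∑ i ∈ Finset.range (p + 1), i * a i) * c := by
    rw [Finset.sum_mul, Finset.sum_mul, ← Finset.sum_add_distrib]
    apply Finset.sum_congr rfl
    intro i hi
    have hip : i ≤ p := Nat.lt_succ_iff.1 (Finset.mem_range.1 hi)
    rw [harith i hip]; ring
  have hxy : (∑ i ∈ Finset.range (p + 1), i * a i) ≤ p * ∑ i ∈ Finset.range (p + 1), a i := by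
    rw [Finset.mul_sum]
    apply Finset.sum_le_sum
    intro i hi
    exact Nat.mul_le_mul_right _ (Nat.lt_succ_iff.1 (Finset.mem_range.1 hi))
  have hcex : ce p (∑ i ∈ Finset.range (p + 1), i * a i) ≤ ∑ i ∈ Finset.range (p + 1), a i :=
    (ce_le_iff hp).2 hxy
  refine ⟨(∑ i ∈ Finset.range (p + 1), a i) - ce p (∑ i ∈ Finset.range (p + 1), i * a i),
    ∑ i ∈ Finset.range (p + 1), i * a i, a (p + 1), ?_⟩
  rw [ha, hsum, gF_eq hp m c harith]
  zify [hcex]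
  ring

end Stmt4Aux

open Stmt4Aux

/-- Every element `γ` of `Γ` can be written uniquely as `a·m_0 + g_s + b·m_n`
with `a ∈ ℕ₀` and `(s,b) ∈ V∖W`. -/
theorem stmt4
    (p n : ℕ) (hp : 1 ≤ p) (hn : n = p + 1)
    (m : ℕ → ℕ) (c : ℕ) (hc : 1 ≤ c) (hm0 : 0 < m 0)
    (harith : ∀ i ≤ p, m i = m 0 + i * c) (hmn : 0 < m n)
    (hgcd : Finset.gcd (Finset.range (n + 1)) m = 1)
    (hminimal : ∀ j ≤ n, ¬ ∃ a : ℕ → ℕ, a j = 0 ∧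
        m j = ∑ i ∈ Finset.range (n + 1), a i * m i)
    (S : Set ℕ)
    (hS : S = {γ | γ ∈ gammaGen n m ∧ ∀ δ ∈ gammaGen n m, δ + m 0 ≠ γ})
    (u : ℕ) (hu : IsLeast {t : ℕ | gF p m t ∉ S} u)
    (v : ℕ) (hv : IsLeast {b : ℕ | 1 ≤ b ∧ b * m n ∈ gammaGen p m} v)
    (lam w mu z : ℕ) (hlam : 1 ≤ lam) (hw : w < v) (hz : z < u)
    (hgu : gF p m u = lam * m 0 + w * m n)
    (hvmn : v * m n = mu * m 0 + gF p m z)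
    (V W : Set (ℕ × ℕ))
    (hV : V = {sb | sb.1 < u ∧ sb.2 < v})
    (hW : W = {sb | u - z ≤ sb.1 ∧ sb.1 < u ∧ v - w ≤ sb.2 ∧ sb.2 < v}) :
    ∀ γ ∈ gammaGen n m, ∃! x : ℕ × ℕ × ℕ,
      (x.2.1, x.2.2) ∈ V \ W ∧ γ = x.1 * m 0 + gF p m x.2.1 + x.2.2 * m n := by
  subst hn
  have hgFeq := gF_eq hp m c harith
  have hu1 : 1 ≤ u := by omega
  have hv1 : 1 ≤ v := hv.1.1
  have hguZ : (ce p u : ℤ) * m 0 + u * c = lam * m 0 + w * m (p + 1) := by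
    have h := hgu; rw [hgFeq] at h; exact_mod_cast h
  have hvmnZ : (v : ℤ) * m (p + 1) = mu * m 0 + (ce p z * m 0 + z * c) := by
    have h := hvmn; rw [hgFeq] at h; exact_mod_cast h
  -- membership producers
  have memG' : ∀ a t : ℕ, a * m 0 + gF p m t ∈ gammaGen p m :=
    fun a t => comb_mem hp le_rfl a t
  have memG : ∀ a t e : ℕ,
      a * m 0 + gF p m t + e * m (p + 1) ∈ gammaGen (p + 1) m :=
    fun a t e => add_mem (comb_mem hp (Nat.le_succ p) a t) (single_mem le_rfl e)
  -- consequences of minimality of u and v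
  have N1 : ∀ s, s < u → ∀ δ ∈ gammaGen (p + 1) m, δ + m 0 ≠ gF p m s := by
    intro s hs
    have hsS : gF p m s ∈ S := by
      by_contra h
      exact absurd (hu.2 h) (by omega)
    rw [hS] at hsS
    exact hsS.2
  have N2 : ∀ β, 1 ≤ β → β < v → β * m (p + 1) ∉ gammaGen p m := by
    intro β h1 h2 hmem
    exact absurd (hv.2 ⟨h1, hmem⟩) (by omega)
  -- the three rewriting moves
  have moveA : ∀ a t e : ℕ, u ≤ t →
      a * m 0 + gF p m t + e * m (p + 1)
        = (a + (ce p t + lam - (ce p u + ce p (t - u)))) * m 0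
          + gF p m (t - u) + (e + w) * m (p + 1) := by
    intro a t e ht
    have hle : ce p u + ce p (t - u) ≤ ce p t + lam := by
      have h1 := ce_super hp u (t - u)
      rw [show u + (t - u) = t by omega] at h1
      omega
    rw [hgFeq t, hgFeq (t - u)]
    zify [hle, ht]
    linear_combination hguZ
  have moveB : ∀ a t e : ℕ, v ≤ e →
      a * m 0 + gF p m t + e * m (p + 1)
        = (a + mu + (ce p t + ce p z - ce p (t + z))) * m 0
          + gF p m (t + z) + (e - v) * m (p + 1) := by
    intro a t e he
    have hle : ce p (t + z) ≤ ce p t + ce p z := ce_subadd hp t z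
    rw [hgFeq t, hgFeq (t + z)]
    zify [hle, he]
    linear_combination hvmnZ
  have moveC : ∀ a t e : ℕ, u - z ≤ t → v - w ≤ e → t < u → e < v →
      a * m 0 + gF p m t + e * m (p + 1)
        = (a + (mu + lam + ce p t + ce p z - (ce p u + ce p (t - (u - z))))) * m 0
          + gF p m (t - (u - z)) + (e - (v - w)) * m (p + 1) := by
    intro a t e ht he htu hev
    have h1 := ce_super hp (t - (u - z)) u
    rw [show t - (u - z) + u = t + z by omega] at h1
    have h2 := ce_subadd hp t z
    have hle : ce p u + ce p (t - (u - z)) ≤ mu + lam + ce p t + ce p z := by omega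
    rw [hgFeq t, hgFeq (t - (u - z))]
    zify [hle, ht, he, show z ≤ u by omega, show w ≤ v by omega]
    linear_combination hguZ + hvmnZ
  -- existence via reduction
  have reduce : ∀ N a t e, v * t + u * e ≤ N →
      ∃ a' s b, (s < u ∧ b < v ∧ ¬(u - z ≤ s ∧ v - w ≤ b)) ∧
        a * m 0 + gF p m t + e * m (p + 1)
          = a' * m 0 + gF p m s + b * m (p + 1) := by
    intro N
    induction N using Nat.strong_induction_on with
    | _ N IH =>
      intro a t e hN
      by_cases htu : u ≤ t
      · have hmeas : v * (t - u) + u * (e + w) < N := by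
          have e1 : v * (t - u) + v * u = v * t := by
            rw [← Nat.mul_add]; congr 1; omega
          have e2 : u * (e + w) = u * e + u * w := Nat.mul_add u e w
          have e3 : u * w + u * (v - w) = u * v := by
            rw [← Nat.mul_add]; congr 1; omega
          have e4 : u * v = v * u := Nat.mul_comm u v
          have e5 : 1 ≤ u * (v - w) := Nat.one_le_iff_ne_zero.2
            (Nat.mul_ne_zero (by omega) (by omega))
          omega
        obtain ⟨a', s, b, hc', heq⟩ :=
          IH _ hmeas (a + (ce p t + lam - (ce p u + ce p (t - u)))) (t - u) (e + w) le_rfl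
        exact ⟨a', s, b, hc', (moveA a t e htu).trans heq⟩
      · by_cases hev : v ≤ e
        · have hmeas : v * (t + z) + u * (e - v) < N := by
            have e1 : v * (t + z) = v * t + v * z := Nat.mul_add v t z
            have e2 : u * (e - v) + u * v = u * e := by
              rw [← Nat.mul_add]; congr 1; omega
            have e3 : v * z + v * (u - z) = v * u := by
              rw [← Nat.mul_add]; congr 1; omega
            have e4 : u * v = v * u := Nat.mul_comm u v
            have e5 : 1 ≤ v * (u - z) := Nat.one_le_iff_ne_zero.2
              (Nat.mul_ne_zero (by omega) (by omega))
            omega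
          obtain ⟨a', s, b, hc', heq⟩ :=
            IH _ hmeas (a + mu + (ce p t + ce p z - ce p (t + z))) (t + z) (e - v) le_rfl
          exact ⟨a', s, b, hc', (moveB a t e hev).trans heq⟩
        · by_cases hWc : u - z ≤ t ∧ v - w ≤ e
          · have hmeas : v * (t - (u - z)) + u * (e - (v - w)) < N := by
              have e1 : v * (t - (u - z)) + v * (u - z) = v * t := by
                rw [← Nat.mul_add]; congr 1; omega
              have e2 : u * (e - (v - w)) ≤ u * e := Nat.mul_le_mul_left _ (by omega)
              have e5 : 1 ≤ v * (u - z) := Nat.one_le_iff_ne_zero.2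
                (Nat.mul_ne_zero (by omega) (by omega))
              omega
            obtain ⟨a', s, b, hc', heq⟩ :=
              IH _ hmeas (a + (mu + lam + ce p t + ce p z - (ce p u + ce p (t - (u - z)))))
                (t - (u - z)) (e - (v - w)) le_rfl
            exact ⟨a', s, b, hc',
              (moveC a t e hWc.1 hWc.2 (by omega) (by omega)).trans heq⟩
          · exact ⟨a, t, e, ⟨by omega, by omega, hWc⟩, rfl⟩
  have hgF0 : gF p m 0 = 0 := by simp [gF]
  have Z : ∀ (σ β : ℕ) (K : ℤ), σ < u → β < v → ¬(u - z ≤ σ ∧ v - w ≤ β) →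
      ¬(σ = 0 ∧ β = 0) → (σ : ℤ) * c + β * m (p + 1) = K * m 0 → False := by
    intro σ β K hσ hβ hnW hne heq
    have hm0Z : (1 : ℤ) ≤ m 0 := by exact_mod_cast hm0
    have hcZ : (1 : ℤ) ≤ c := by exact_mod_cast hc
    have hmnZ : (1 : ℤ) ≤ m (p + 1) := by exact_mod_cast hmn
    rcases Nat.eq_zero_or_pos β with hβ0 | hβpos
    · subst hβ0
      push_cast at heq
      have hσpos : 1 ≤ σ := by omega
      have hσZ : (1 : ℤ) ≤ (σ : ℤ) := by exact_mod_cast hσpos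
      have hK : 1 ≤ K := by nlinarith
      have hcepos := ce_pos hp hσpos
      refine (N1 σ hσ ((ce p σ + K.toNat - 1) * m 0 + gF p m 0 + 0 * m (p + 1))
        (memG _ _ _)) ?_
      rw [hgF0, add_zero, zero_mul, add_zero]
      have hZg : (((ce p σ + K.toNat - 1) * m 0 + m 0 : ℕ) : ℤ) = (gF p m σ : ℤ) := by
        push_cast [show ((ce p σ + K.toNat - 1 : ℕ) : ℤ) = ce p σ + K - 1 by omega]
        rw [hgFeq σ]
        push_cast
        linear_combination -heq
      exact_mod_cast hZg
    rcases Nat.eq_zero_or_pos σ with hσ0 | hσpos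
    · subst hσ0
      push_cast at heq
      have hβZ : (1 : ℤ) ≤ (β : ℤ) := by exact_mod_cast hβpos
      have hK : 0 ≤ K := by nlinarith
      refine N2 β hβpos hβ ?_
      have hg : β * m (p + 1) = K.toNat * m 0 + gF p m 0 := by
        have hZg : ((β * m (p + 1) : ℕ) : ℤ) = ((K.toNat * m 0 + gF p m 0 : ℕ) : ℤ) := by
          rw [hgF0]
          push_cast [Int.toNat_of_nonneg hK]
          linear_combination heq
        exact_mod_cast hZg
      rw [hg]; exact memG' _ _
    rcases (show σ < u - z ∨ β < v - w by omega) with hcase | hcase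
    · -- use the relation v·m_n = mu·m_0 + g_z
      have hσz : σ + z < u := by omega
      have key : (gF p m (σ + z) : ℤ)
          = (K - ce p z + ce p (σ + z) - mu) * m 0 + ((v : ℤ) - β) * m (p + 1) := by
        rw [hgFeq (σ + z)]
        push_cast [Nat.cast_sub (le_of_lt hβ)]
        linear_combination heq - hvmnZ
      set L : ℤ := K - ce p z + ce p (σ + z) - mu with hL
      rcases le_or_gt L 0 with hL0 | hL0
      · refine N2 (v - β) (by omega) (by omega) ?_
        have hg : (v - β) * m (p + 1) = (-L).toNat * m 0 + gF p m (σ + z) := by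
          have hZg : (((v - β) * m (p + 1) : ℕ) : ℤ)
              = (((-L).toNat * m 0 + gF p m (σ + z) : ℕ) : ℤ) := by
            push_cast [Int.toNat_of_nonneg (by omega : (0 : ℤ) ≤ -L),
              Nat.cast_sub (le_of_lt hβ)]
            linear_combination -key
          exact_mod_cast hZg
        rw [hg]; exact memG' _ _
      · refine (N1 (σ + z) hσz ((L.toNat - 1) * m 0 + gF p m 0 + (v - β) * m (p + 1))
          (memG _ _ _)) ?_
        rw [hgF0, add_zero]
        have hZg : (((L.toNat - 1) * m 0 + (v - β) * m (p + 1) + m 0 : ℕ) : ℤ)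
            = (gF p m (σ + z) : ℤ) := by
          push_cast [show ((L.toNat - 1 : ℕ) : ℤ) = L - 1 by omega,
            Nat.cast_sub (le_of_lt hβ)]
          linear_combination -key
        exact_mod_cast hZg
    · -- use the relation g_u = lam·m_0 + w·m_n
      have hσu : σ ≤ u := by omega
      have huσ : u - σ < u := by omega
      have key : ((w : ℤ) + β) * m (p + 1)
          = (gF p m (u - σ) : ℤ) + (K + ce p u - lam - ce p (u - σ)) * m 0 := by
        rw [hgFeq (u - σ)]
        push_cast [Nat.cast_sub hσu]
        linear_combination heq - hguZ
      set L : ℤ := K + ce p u - lam - ce p (u - σ) with hL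
      rcases le_or_gt 0 L with hL0 | hL0
      · refine N2 (w + β) (by omega) (by omega) ?_
        have hg : (w + β) * m (p + 1) = L.toNat * m 0 + gF p m (u - σ) := by
          have hZg : (((w + β) * m (p + 1) : ℕ) : ℤ)
              = ((L.toNat * m 0 + gF p m (u - σ) : ℕ) : ℤ) := by
            push_cast [Int.toNat_of_nonneg hL0]
            linear_combination key
          exact_mod_cast hZg
        rw [hg]; exact memG' _ _
      · refine (N1 (u - σ) huσ (((-L).toNat - 1) * m 0 + gF p m 0 + (w + β) * m (p + 1))
          (memG _ _ _)) ?_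
        rw [hgF0, add_zero]
        have hZg : ((((-L).toNat - 1) * m 0 + (w + β) * m (p + 1) + m 0 : ℕ) : ℤ)
            = (gF p m (u - σ) : ℤ) := by
          push_cast [show (((-L).toNat - 1 : ℕ) : ℤ) = -L - 1 by omega]
          linear_combination key
        exact_mod_cast hZg
  have SubB : ∀ (σ' β : ℕ) (K : ℤ), 1 ≤ σ' → σ' < u → 1 ≤ β → β < v →
      (β : ℤ) * m (p + 1) = σ' * c + K * m 0 → False := by
    intro σ' β K h1 h2 h3 h4 heq
    rcases le_or_gt (ce p σ' : ℤ) K with hK | hK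
    · refine N2 β h3 h4 ?_
      have hg : β * m (p + 1) = (K - ce p σ').toNat * m 0 + gF p m σ' := by
        have hZg : ((β * m (p + 1) : ℕ) : ℤ)
            = (((K - ce p σ').toNat * m 0 + gF p m σ' : ℕ) : ℤ) := by
          push_cast [Int.toNat_of_nonneg (by omega : (0 : ℤ) ≤ K - ce p σ')]
          rw [hgFeq σ']
          push_cast
          linear_combination heq
        exact_mod_cast hZg
      rw [hg]; exact memG' _ _
    · refine (N1 σ' h2 ((((ce p σ' : ℤ) - K).toNat - 1) * m 0 + gF p m 0 + β * m (p + 1))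
        (memG _ _ _)) ?_
      rw [hgF0, add_zero]
      have hZg : (((((ce p σ' : ℤ) - K).toNat - 1) * m 0 + β * m (p + 1) + m 0 : ℕ) : ℤ)
          = (gF p m σ' : ℤ) := by
        push_cast [show ((((ce p σ' : ℤ) - K).toNat - 1 : ℕ) : ℤ)
            = (ce p σ' : ℤ) - K - 1 by omega]
        rw [hgFeq σ']
        push_cast
        linear_combination heq
      exact_mod_cast hZg
  have injle : ∀ s b s' b' : ℕ, s < u → b < v → ¬(u - z ≤ s ∧ v - w ≤ b) →
      s' < u → b' < v → ¬(u - z ≤ s' ∧ v - w ≤ b') → b' ≤ b → ∀ K : ℤ,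
      (s : ℤ) * c + b * m (p + 1) = s' * c + b' * m (p + 1) + K * m 0 →
      s = s' ∧ b = b' := by
    intro s b s' b' hs hb hWsb hs' hb' hWs'b' hbb K heq
    rcases le_or_gt s' s with hss | hss
    · by_cases hzero : s = s' ∧ b = b'
      · exact hzero
      · exfalso
        apply Z (s - s') (b - b') K (by omega) (by omega) (by omega) (by omega)
        push_cast [Nat.cast_sub hss, Nat.cast_sub hbb]
        linear_combination heq
    · rcases Nat.eq_zero_or_pos (b - b') with hβ0 | hβpos
      · exfalso
        apply Z (s' - s) 0 (-K) (by omega) (by omega) (by omega) (by omega)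
        have hbb' : b = b' := by omega
        subst hbb'
        push_cast [Nat.cast_sub (le_of_lt hss)]
        linear_combination -heq
      · exfalso
        refine SubB (s' - s) (b - b') K (by omega) (by omega) hβpos (by omega) ?_
        push_cast [Nat.cast_sub (le_of_lt hss), Nat.cast_sub hbb]
        linear_combination heq
  have inj : ∀ s b s' b' : ℕ, s < u → b < v → ¬(u - z ≤ s ∧ v - w ≤ b) →
      s' < u → b' < v → ¬(u - z ≤ s' ∧ v - w ≤ b') → ∀ K : ℤ,
      (s : ℤ) * c + b * m (p + 1) = s' * c + b' * m (p + 1) + K * m 0 →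
      s = s' ∧ b = b' := by
    intro s b s' b' hs hb hWsb hs' hb' hWs'b' K heq
    rcases le_total b' b with h | h
    · exact injle s b s' b' hs hb hWsb hs' hb' hWs'b' h K heq
    · have h2 := injle s' b' s b hs' hb' hWs'b' hs hb hWsb h (-K) (by linear_combination -heq)
      exact ⟨h2.1.symm, h2.2.symm⟩
  -- main proof
  intro γ hγ
  obtain ⟨a0, t0, e0, hrep⟩ := forward hp harith hγ
  obtain ⟨a, s, b, ⟨hsu, hbv, hWc⟩, heqr⟩ := reduce (v * t0 + u * e0) a0 t0 e0 le_rfl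
  have hγeq : γ = a * m 0 + gF p m s + b * m (p + 1) := hrep.trans heqr
  refine ⟨(a, s, b), ⟨?_, hγeq⟩, ?_⟩
  · rw [hV, hW]
    refine ⟨⟨hsu, hbv⟩, ?_⟩
    intro hmem
    exact hWc ⟨hmem.1, hmem.2.2.1⟩
  · rintro ⟨a', s', b'⟩ ⟨hmem', heq'⟩
    rw [hV, hW] at hmem'
    obtain ⟨⟨hs'u, hb'v⟩, hW'⟩ := hmem'
    have hW'' : ¬(u - z ≤ s' ∧ v - w ≤ b') := fun hcon => hW' ⟨hcon.1, hs'u, hcon.2, hb'v⟩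
    have heqq : a' * m 0 + gF p m s' + b' * m (p + 1)
        = a * m 0 + gF p m s + b * m (p + 1) := by
      rw [← heq', ← hγeq]
    have hKeq : (s' : ℤ) * c + b' * m (p + 1)
        = (s : ℤ) * c + b * m (p + 1)
          + ((a : ℤ) + ce p s - a' - ce p s') * m 0 := by
      have hq := congrArg (Nat.cast : ℕ → ℤ) heqq
      push_cast [hgFeq] at hq
      linear_combination hq
    obtain ⟨h1, h2⟩ := inj s' b' s b hs'u hb'v hW'' hsu hbv hWc _ hKeq
    subst h1; subst h2
    have h3 : a' * m 0 = a * m 0 :=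
      Nat.add_right_cancel (Nat.add_right_cancel heqq)
    have h4 : a' = a := Nat.eq_of_mul_eq_mul_right hm0 h3
    rw [h4]
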